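/- Let Ψ be the standard normal tail, a_u → ∞, and suppose h_u: [0,∞) → R is measurable with h_u(x) → -∞ pointwise (hence P(N > h_u(x)) → 1) for each x ≥ 0, and 0 ≤ P(N > h_u(x)) ≤ 1. Then (1/(√(2π) a_u)) e^{-a_u²/2} ∫_0^∞ P(N > h_u(x)) e^{-x²/(2a_u²) - x} dx ~ Ψ(a_u) as u → ∞. -/

import Mathlib

open MeasureTheory ProbabilityTheory Filter

/-- tail of the standard normal distribution -/
noncomputable def gaussTail (x : ℝ) : ℝ := ((gaussianReal 0 1) (Set.Ioi x)).toReal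

lemma gaussTail_antitone : Antitone gaussTail := fun y z hyz =>
  ENNReal.toReal_mono (measure_ne_top _ _) (measure_mono (Set.Ioi_subset_Ioi hyz))

lemma gaussTail_nonneg (x : ℝ) : 0 ≤ gaussTail x := ENNReal.toReal_nonneg

lemma gaussTail_le_one (x : ℝ) : gaussTail x ≤ 1 := by
  have := prob_le_one (μ := gaussianReal 0 1) (s := Set.Ioi x)
  simpa [gaussTail] using ENNReal.toReal_mono ENNReal.one_ne_top this

lemma gaussTail_tendsto_one : Tendsto gaussTail atBot (nhds 1) := by
  have h1 : Tendsto (fun y : ℝ => (gaussianReal 0 1) (Set.Ioi y)) atBot (nhds 1) := by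
    have hlow : Tendsto (fun y : ℝ => (gaussianReal 0 1) (Set.Ici (y + 1))) atBot (nhds 1) := by
      have := (tendsto_measure_Ici_atBot (gaussianReal 0 1)).comp
        (tendsto_atBot_add_const_right atBot 1 tendsto_id)
      simpa [Function.comp_def] using this
    refine tendsto_of_tendsto_of_tendsto_of_le_of_le hlow tendsto_const_nhds
      (fun y => measure_mono (fun t ht => lt_of_lt_of_le (by linarith : y < y + 1) ht)) (fun y => prob_le_one)
  have := (ENNReal.tendsto_toReal ENNReal.one_ne_top).comp h1
  simp only [Function.comp_def] at this
  exact this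

lemma setIntegral_Ioi_comp_add (g : ℝ → ℝ) (a : ℝ) :
    ∫ t in Set.Ioi a, g t = ∫ x in Set.Ioi (0:ℝ), g (x + a) := by
  have he : MeasurableEmbedding (fun x : ℝ => x + a) :=
    (Homeomorph.addRight a).isClosedEmbedding.measurableEmbedding
  calc ∫ t in Set.Ioi a, g t
      = ∫ t in Set.Ioi a, g t ∂(Measure.map (· + a) volume) := by
        rw [map_add_right_eq_self]
    _ = ∫ x in (· + a) ⁻¹' Set.Ioi a, g (x + a) := he.setIntegral_map g _
    _ = ∫ x in Set.Ioi (0:ℝ), g (x + a) := by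
        rw [Set.preimage_add_const_Ioi, sub_self]

lemma gaussTail_eq {a : ℝ} (ha : 0 < a) :
    gaussTail a = 1 / (Real.sqrt (2 * Real.pi) * a) * Real.exp (-a ^ 2 / 2) *
      ∫ x in Set.Ioi (0:ℝ), Real.exp (-x ^ 2 / (2 * a ^ 2) - x) := by
  have h1 : gaussTail a = ∫ t in Set.Ioi a, gaussianPDFReal 0 1 t := by
    rw [gaussTail, gaussianReal_apply_eq_integral 0 one_ne_zero, ENNReal.toReal_ofReal]
    exact setIntegral_nonneg measurableSet_Ioi fun x _ => gaussianPDFReal_nonneg _ _ _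
  have h2 : ∫ x in Set.Ioi (0:ℝ), gaussianPDFReal 0 1 (a⁻¹ * x + a)
      = a • ∫ x in Set.Ioi (0:ℝ), gaussianPDFReal 0 1 (x + a) := by
    have := integral_comp_mul_left_Ioi (fun y => gaussianPDFReal 0 1 (y + a)) 0
      (inv_pos.mpr ha)
    simpa [mul_zero, inv_inv] using this
  have h3 : ∀ x : ℝ, gaussianPDFReal 0 1 (a⁻¹ * x + a)
      = (Real.sqrt (2 * Real.pi))⁻¹ * (Real.exp (-a ^ 2 / 2) *
        Real.exp (-x ^ 2 / (2 * a ^ 2) - x)) := by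
    intro x
    rw [gaussianPDFReal, ← Real.exp_add]
    push_cast
    congr 1
    · norm_num
    · have h2a : (2 : ℝ) * a ^ 2 ≠ 0 := by positivity
      field_simp
      ring
  rw [h1, setIntegral_Ioi_comp_add (gaussianPDFReal 0 1) a]
  have h4 : ∫ x in Set.Ioi (0:ℝ), gaussianPDFReal 0 1 (x + a)
      = a⁻¹ * ∫ x in Set.Ioi (0:ℝ), gaussianPDFReal 0 1 (a⁻¹ * x + a) := by
    rw [h2, smul_eq_mul, ← mul_assoc, inv_mul_cancel₀ ha.ne', one_mul]
  rw [h4]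
  simp_rw [h3]
  rw [integral_const_mul, integral_const_mul]
  rw [one_div, mul_inv]
  ring

theorem tail_integral_asymptotic
    (a : ℝ → ℝ) (h : ℝ → ℝ → ℝ)
    (ha : Tendsto a atTop atTop)
    (hmeas : ∀ u, Measurable (h u))
    (hdiv : ∀ x : ℝ, 0 ≤ x → Tendsto (fun u => h u x) atTop atBot) :
    Tendsto
      (fun u =>
        (1 / (Real.sqrt (2 * Real.pi) * a u) * Real.exp (-(a u) ^ 2 / 2) *
          ∫ x in Set.Ioi (0 : ℝ),
            gaussTail (h u x) * Real.exp (-x ^ 2 / (2 * (a u) ^ 2) - x)) /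
        gaussTail (a u))
      atTop (nhds 1) := by
  set N : ℝ → ℝ := fun u => ∫ x in Set.Ioi (0:ℝ),
    gaussTail (h u x) * Real.exp (-x ^ 2 / (2 * (a u) ^ 2) - x) with hN_def
  set D : ℝ → ℝ := fun u => ∫ x in Set.Ioi (0:ℝ),
    Real.exp (-x ^ 2 / (2 * (a u) ^ 2) - x) with hD_def
  have hgt_meas : Measurable gaussTail := gaussTail_antitone.measurable
  have hbound_int : IntegrableOn (fun x : ℝ => Real.exp (-x)) (Set.Ioi 0) := by
    simpa using exp_neg_integrableOn_Ioi 0 one_pos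
  have hsq : Tendsto (fun u => 2 * (a u) ^ 2) atTop atTop := by
    have h1 : Tendsto (fun u => (a u) ^ 2) atTop atTop :=
      (tendsto_pow_atTop two_ne_zero).comp ha
    exact h1.const_mul_atTop two_pos
  have hexp_lim : ∀ x : ℝ, Tendsto (fun u => Real.exp (-x ^ 2 / (2 * (a u) ^ 2) - x))
      atTop (nhds (Real.exp (-x))) := by
    intro x
    have h1 : Tendsto (fun u => -x ^ 2 / (2 * (a u) ^ 2)) atTop (nhds 0) :=
      Tendsto.div_atTop tendsto_const_nhds hsq
    have h2 : Tendsto (fun u => -x ^ 2 / (2 * (a u) ^ 2) - x) atTop (nhds (-x)) := by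
      simpa using h1.sub_const x
    exact (Real.continuous_exp.tendsto _).comp h2
  have hexp_le : ∀ (u x : ℝ), Real.exp (-x ^ 2 / (2 * (a u) ^ 2) - x) ≤ Real.exp (-x) := by
    intro u x
    apply Real.exp_le_exp.mpr
    have : 0 ≤ x ^ 2 / (2 * (a u) ^ 2) := div_nonneg (sq_nonneg x) (by positivity)
    rw [neg_div]
    linarith
  have hexp_pos : ∀ (u x : ℝ), 0 < Real.exp (-x ^ 2 / (2 * (a u) ^ 2) - x) :=
    fun u x => Real.exp_pos _
  -- numerator tends to 1
  have hN : Tendsto N atTop (nhds 1) := by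
    have := tendsto_integral_filter_of_dominated_convergence (μ := volume.restrict (Set.Ioi 0))
      (l := atTop) (F := fun u x => gaussTail (h u x) * Real.exp (-x ^ 2 / (2 * (a u) ^ 2) - x))
      (f := fun x => Real.exp (-x)) (bound := fun x => Real.exp (-x))
      (Eventually.of_forall fun u =>
        ((hgt_meas.comp (hmeas u)).mul (by fun_prop)).aestronglyMeasurable)
      (Eventually.of_forall fun u => ae_of_all _ fun x => by
        have h1 : |gaussTail (h u x) * Real.exp (-x ^ 2 / (2 * (a u) ^ 2) - x)|
            = gaussTail (h u x) * Real.exp (-x ^ 2 / (2 * (a u) ^ 2) - x) :=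
          abs_of_nonneg (mul_nonneg (gaussTail_nonneg _) (hexp_pos u x).le)
        rw [Real.norm_eq_abs, h1]
        calc gaussTail (h u x) * Real.exp (-x ^ 2 / (2 * (a u) ^ 2) - x)
            ≤ 1 * Real.exp (-x ^ 2 / (2 * (a u) ^ 2) - x) :=
              mul_le_mul_of_nonneg_right (gaussTail_le_one _) (hexp_pos u x).le
          _ = Real.exp (-x ^ 2 / (2 * (a u) ^ 2) - x) := one_mul _
          _ ≤ Real.exp (-x) := hexp_le u x)
      hbound_int
      (by
        rw [ae_restrict_iff' measurableSet_Ioi]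
        refine ae_of_all _ fun x hx => ?_
        have hg : Tendsto (fun u => gaussTail (h u x)) atTop (nhds 1) :=
          gaussTail_tendsto_one.comp (hdiv x (le_of_lt hx))
        simpa using hg.mul (hexp_lim x))
    simp only [integral_exp_neg_Ioi_zero] at this
    simpa [hN_def] using this
  -- denominator tends to 1
  have hD : Tendsto D atTop (nhds 1) := by
    have := tendsto_integral_filter_of_dominated_convergence (μ := volume.restrict (Set.Ioi 0))
      (l := atTop) (F := fun u x => Real.exp (-x ^ 2 / (2 * (a u) ^ 2) - x))
      (f := fun x => Real.exp (-x)) (bound := fun x => Real.exp (-x))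
      (Eventually.of_forall fun u => (by fun_prop : Measurable _).aestronglyMeasurable)
      (Eventually.of_forall fun u => ae_of_all _ fun x => by
        rw [Real.norm_eq_abs, abs_of_nonneg (hexp_pos u x).le]
        exact hexp_le u x)
      hbound_int
      (ae_of_all _ fun x => hexp_lim x)
    simp only [integral_exp_neg_Ioi_zero] at this
    simpa [hD_def] using this
  have hmain : Tendsto (fun u => N u / D u) atTop (nhds 1) := by
    have := hN.div hD one_ne_zero
    rw [div_one] at this
    exact this
  refine hmain.congr' ?_
  filter_upwards [ha.eventually_gt_atTop 0] with u hu
  have hc : (0:ℝ) < 1 / (Real.sqrt (2 * Real.pi) * a u) * Real.exp (-(a u) ^ 2 / 2) := by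
    have := Real.pi_pos
    positivity
  rw [gaussTail_eq hu]
  rw [mul_div_mul_left _ _ hc.ne']
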